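/- Let gamma ∈ (0,1) and let rho be a nonnegative integrable function on R with total mass M = ∫ rho dx > 0 and finite second moment I = ∫ x^2 rho(x) dx, and zero center of mass. Then the interaction energy satisfies ∫∫ rho(x) |x - y|^{-gamma} rho(y) dx dy ≥ 2^{-gamma/2} M^{2 + gamma/2} I^{-gamma/2}. -/

import Mathlib

open MeasureTheory Real

lemma aux_tangent {p z z₀ : ℝ} (hp : 0 < p) (hz : 0 < z) (hz₀ : 0 < z₀) :
    (1 + p) * z₀ ^ (-p) - p * z₀ ^ (-p - 1) * z ≤ z ^ (-p) := by
  have hu : 0 < z / z₀ := div_pos hz hz₀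
  have h1p : (0:ℝ) < 1 + p := by linarith
  have key : (1:ℝ) + p ≤ (z / z₀) ^ (-p) + p * (z / z₀) := by
    have h := Real.geom_mean_le_arith_mean2_weighted
      (w₁ := 1/(1+p)) (w₂ := p/(1+p)) (p₁ := (z/z₀) ^ (-p)) (p₂ := z/z₀)
      (by positivity) (by positivity) (Real.rpow_nonneg hu.le _) hu.le (by field_simp)
    have hl : ((z/z₀) ^ (-p)) ^ (1/(1+p)) * (z/z₀) ^ (p/(1+p)) = 1 := by
      rw [← Real.rpow_mul hu.le, ← Real.rpow_add hu,
        show -p * (1/(1+p)) + p/(1+p) = (0:ℝ) by field_simp; ring, Real.rpow_zero]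
    rw [hl] at h
    have h2 := mul_le_mul_of_nonneg_left h h1p.le
    have e : (1+p) * (1/(1+p) * ((z/z₀) ^ (-p)) + p/(1+p) * (z/z₀))
        = (z/z₀) ^ (-p) + p * (z/z₀) := by field_simp
    rw [mul_one, e] at h2
    exact h2
  have hz0p : (0:ℝ) < z₀ ^ (-p) := Real.rpow_pos_of_pos hz₀ _
  have hdiv : (z/z₀) ^ (-p) = z ^ (-p) / z₀ ^ (-p) := Real.div_rpow hz.le hz₀.le (-p)
  have hs : z₀ ^ (-p-1) = z₀ ^ (-p) / z₀ := by
    rw [show (-p-1 : ℝ) = -p + (-1) by ring, Real.rpow_add hz₀, Real.rpow_neg_one]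
    ring
  rw [hdiv] at key
  rw [hs]
  have h3 := mul_le_mul_of_nonneg_right key hz0p.le
  have e2 : (z ^ (-p) / z₀ ^ (-p) + p * (z / z₀)) * z₀ ^ (-p)
      = z ^ (-p) + p * (z₀ ^ (-p) / z₀) * z := by field_simp
  rw [e2] at h3
  linarith

theorem stmt_9 (γ : ℝ) (hγ : γ ∈ Set.Ioo (0 : ℝ) 1) (ρ : ℝ → ℝ)
    (hρ : ∀ x, 0 ≤ ρ x) (hint : Integrable ρ)
    (M : ℝ) (hM : ∫ x, ρ x = M) (hMpos : 0 < M)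
    (hxint : Integrable (fun x => x * ρ x)) (hc : ∫ x, x * ρ x = 0)
    (I : ℝ) (hI2 : Integrable (fun x => x ^ 2 * ρ x)) (hI : ∫ x, x ^ 2 * ρ x = I) :
    ENNReal.ofReal ((2 : ℝ) ^ (-γ / 2) * M ^ (2 + γ / 2) * I ^ (-γ / 2)) ≤
      ∫⁻ x, ∫⁻ y, ENNReal.ofReal (ρ x * |x - y| ^ (-γ) * ρ y) := by
  obtain ⟨hγ0, hγ1⟩ := hγ
  have hρm : AEMeasurable ρ := hint.aemeasurable
  -- I is positive
  have hInn : 0 ≤ I := hI ▸ integral_nonneg (fun x => mul_nonneg (sq_nonneg x) (hρ x))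
  have hIpos : 0 < I := by
    rcases hInn.lt_or_eq with h | h
    · exact h
    · exfalso
      have h0 : (fun x => x ^ 2 * ρ x) =ᵐ[volume] 0 := by
        rw [← integral_eq_zero_iff_of_nonneg (fun x => mul_nonneg (sq_nonneg x) (hρ x)) hI2]
        rw [hI, ← h]
      have hne : ∀ᵐ x : ℝ, x ≠ 0 := by
        refine ae_iff.2 ?_
        simpa [Set.setOf_eq_eq_singleton, not_not] using measure_singleton (0:ℝ)
      have hρ0 : ρ =ᵐ[volume] 0 := by
        filter_upwards [h0, hne] with x hx hxne
        have hx2 : x ^ 2 ≠ 0 := pow_ne_zero _ hxne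
        have : x ^ 2 * ρ x = 0 := hx
        simpa [hx2] using this
      have : M = 0 := by rw [← hM, integral_congr_ae hρ0]; simp
      linarith
  set p := γ / 2 with hpdef
  have hp : 0 < p := by rw [hpdef]; linarith
  rw [show -γ / 2 = -p by rw [hpdef]; ring]
  set z₀ := 2 * I / M with hz₀def
  have hz₀ : 0 < z₀ := by rw [hz₀def]; positivity
  set A := (1 + p) * z₀ ^ (-p) with hA
  set B := p * z₀ ^ (-p - 1) with hB
  have hz0p : (0:ℝ) < z₀ ^ (-p) := Real.rpow_pos_of_pos hz₀ _
  have hz0p1 : (0:ℝ) < z₀ ^ (-p - 1) := Real.rpow_pos_of_pos hz₀ _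
  have hApos : 0 < A := by rw [hA]; positivity
  have hBpos : 0 < B := by rw [hB]; positivity
  -- tangent line inequality
  have htan : ∀ x y : ℝ, y ≠ x → A ≤ |x - y| ^ (-γ) + B * (x - y) ^ 2 := by
    intro x y hxy
    have hsub : x - y ≠ 0 := sub_ne_zero.2 (fun h => hxy h.symm)
    have hz : (0:ℝ) < (x - y) ^ 2 := by positivity
    have h := aux_tangent hp hz hz₀
    have heq : ((x - y) ^ 2 : ℝ) ^ (-p) = |x - y| ^ (-γ) := by
      rw [← sq_abs, ← Real.rpow_natCast |x - y| 2, ← Real.rpow_mul (abs_nonneg _)]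
      norm_num
      rw [show -(2 * p) = -γ by rw [hpdef]; ring]
    rw [heq] at h
    rw [hA, hB]
    linarith
  set L := ∫⁻ x, ∫⁻ y, ENNReal.ofReal (ρ x * |x - y| ^ (-γ) * ρ y) with hL
  -- inner inequality
  have hinner : ∀ x : ℝ, ENNReal.ofReal (A * ρ x * M) ≤
      (∫⁻ y, ENNReal.ofReal (ρ x * |x - y| ^ (-γ) * ρ y))
        + ENNReal.ofReal (B * ρ x * (x ^ 2 * M + I)) := by
    intro x
    have hdec : (fun y => B * (x - y) ^ 2 * ρ x * ρ y)
        = fun y => (B * ρ x * x ^ 2) * ρ y + (-(2 * B * ρ x * x)) * (y * ρ y)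
            + (B * ρ x) * (y ^ 2 * ρ y) := by
      funext y; ring
    have hg2i : Integrable (fun y => B * (x - y) ^ 2 * ρ x * ρ y) := by
      rw [hdec]
      exact ((hint.const_mul _).add (hxint.const_mul _)).add (hI2.const_mul _)
    have i1 : Integrable (fun y => (B * ρ x * x ^ 2) * ρ y) := hint.const_mul _
    have i2 : Integrable (fun y => (-(2 * B * ρ x * x)) * (y * ρ y)) := hxint.const_mul _
    have i3 : Integrable (fun y => (B * ρ x) * (y ^ 2 * ρ y)) := hI2.const_mul _
    have i12 : Integrable (fun y => (B * ρ x * x ^ 2) * ρ y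
        + (-(2 * B * ρ x * x)) * (y * ρ y)) := i1.add i2
    have hg2int : ∫ y, B * (x - y) ^ 2 * ρ x * ρ y = B * ρ x * (x ^ 2 * M + I) := by
      rw [hdec, integral_add i12 i3, integral_add i1 i2,
        integral_const_mul, integral_const_mul, integral_const_mul, hM, hc, hI]
      ring
    have hax : ∀ᵐ y : ℝ, y ≠ x := by
      refine ae_iff.2 ?_
      simpa [Set.setOf_eq_eq_singleton, not_not] using measure_singleton x
    have ham : AEMeasurable (fun y => ENNReal.ofReal (B * (x - y) ^ 2 * ρ x * ρ y)) := by
      apply ENNReal.measurable_ofReal.comp_aemeasurable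
      exact ((((measurable_const.sub measurable_id).pow_const 2).const_mul B).mul_const
        (ρ x)).aemeasurable.mul hρm
    calc ENNReal.ofReal (A * ρ x * M)
        = ∫⁻ y, ENNReal.ofReal (A * ρ x * ρ y) := by
          rw [← ofReal_integral_eq_lintegral_ofReal (hint.const_mul (A * ρ x))
            (Filter.Eventually.of_forall fun y =>
              mul_nonneg (mul_nonneg hApos.le (hρ x)) (hρ y)),
            integral_const_mul, hM]
      _ ≤ ∫⁻ y, (ENNReal.ofReal (ρ x * |x - y| ^ (-γ) * ρ y)
            + ENNReal.ofReal (B * (x - y) ^ 2 * ρ x * ρ y)) := by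
          apply lintegral_mono_ae
          filter_upwards [hax] with y hy
          rw [← ENNReal.ofReal_add
            (mul_nonneg (mul_nonneg (hρ x) (Real.rpow_nonneg (abs_nonneg _) _)) (hρ y))
            (mul_nonneg (mul_nonneg (mul_nonneg hBpos.le (sq_nonneg _)) (hρ x)) (hρ y))]
          apply ENNReal.ofReal_le_ofReal
          have h1 := htan x y hy
          have h2 : 0 ≤ ρ x * ρ y := mul_nonneg (hρ x) (hρ y)
          nlinarith [mul_le_mul_of_nonneg_right h1 h2]
      _ = (∫⁻ y, ENNReal.ofReal (ρ x * |x - y| ^ (-γ) * ρ y))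
            + ∫⁻ y, ENNReal.ofReal (B * (x - y) ^ 2 * ρ x * ρ y) :=
          lintegral_add_right' _ ham
      _ = (∫⁻ y, ENNReal.ofReal (ρ x * |x - y| ^ (-γ) * ρ y))
            + ENNReal.ofReal (B * ρ x * (x ^ 2 * M + I)) := by
          rw [← ofReal_integral_eq_lintegral_ofReal hg2i
            (Filter.Eventually.of_forall fun y =>
              mul_nonneg (mul_nonneg (mul_nonneg hBpos.le (sq_nonneg _)) (hρ x)) (hρ y)),
            hg2int]
  -- outer inequality
  have hdec2 : (fun x => B * ρ x * (x ^ 2 * M + I))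
      = fun x => (B * M) * (x ^ 2 * ρ x) + (B * I) * ρ x := by
    funext x; ring
  have hgi2 : Integrable (fun x => B * ρ x * (x ^ 2 * M + I)) := by
    rw [hdec2]; exact (hI2.const_mul _).add (hint.const_mul _)
  have j1 : Integrable (fun x => (B * M) * (x ^ 2 * ρ x)) := hI2.const_mul _
  have j2 : Integrable (fun x => (B * I) * ρ x) := hint.const_mul _
  have hgint2 : ∫ x, B * ρ x * (x ^ 2 * M + I) = B * (2 * M * I) := by
    rw [hdec2, integral_add j1 j2, integral_const_mul, integral_const_mul, hI, hM]
    ring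
  have ham2 : AEMeasurable (fun x => ENNReal.ofReal (B * ρ x * (x ^ 2 * M + I))) := by
    apply ENNReal.measurable_ofReal.comp_aemeasurable
    exact ((hρm.const_mul B).mul
      (((measurable_id.pow_const 2).mul_const M).add_const I).aemeasurable)
  have houter : ENNReal.ofReal (A * (M * M)) ≤ L + ENNReal.ofReal (B * (2 * M * I)) := by
    calc ENNReal.ofReal (A * (M * M))
        = ∫⁻ x, ENNReal.ofReal (A * ρ x * M) := by
          have e : (fun x => A * ρ x * M) = fun x => (A * M) * ρ x := by funext x; ring
          rw [← ofReal_integral_eq_lintegral_ofReal (by rw [e]; exact hint.const_mul _)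
            (Filter.Eventually.of_forall fun x =>
              mul_nonneg (mul_nonneg hApos.le (hρ x)) hMpos.le)]
          rw [e, integral_const_mul, hM]
          ring_nf
      _ ≤ ∫⁻ x, ((∫⁻ y, ENNReal.ofReal (ρ x * |x - y| ^ (-γ) * ρ y))
            + ENNReal.ofReal (B * ρ x * (x ^ 2 * M + I))) := lintegral_mono hinner
      _ = L + ∫⁻ x, ENNReal.ofReal (B * ρ x * (x ^ 2 * M + I)) :=
          lintegral_add_right' _ ham2
      _ = L + ENNReal.ofReal (B * (2 * M * I)) := by
          rw [← ofReal_integral_eq_lintegral_ofReal hgi2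
            (Filter.Eventually.of_forall fun x =>
              mul_nonneg (mul_nonneg hBpos.le (hρ x)) (by positivity)),
            hgint2]
  -- arithmetic identity
  have hz₀inv : z₀⁻¹ = M / (2 * I) := by rw [hz₀def, inv_div]
  have hs : z₀ ^ (-p - 1) = z₀ ^ (-p) * (M / (2 * I)) := by
    rw [show (-p - 1 : ℝ) = -p + (-1) by ring, Real.rpow_add hz₀, Real.rpow_neg_one, hz₀inv]
  have h1 : z₀ ^ (-p) = 2 ^ (-p) * I ^ (-p) * M ^ p := by
    rw [hz₀def, Real.div_rpow (by positivity) hMpos.le,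
      Real.mul_rpow (by norm_num) hIpos.le, Real.rpow_neg hMpos.le, div_eq_mul_inv, inv_inv]
  have h2 : M ^ (2 + p) = M ^ (2:ℕ) * M ^ p := by
    rw [show (2 + p : ℝ) = (2:ℕ) + p by norm_num, Real.rpow_add hMpos, Real.rpow_natCast]
  have hTeq : (2:ℝ) ^ (-p) * M ^ (2 + p) * I ^ (-p) + B * (2 * M * I) = A * (M * M) := by
    rw [h2, hB, hs, hA, h1]
    field_simp
  rw [← hTeq, ENNReal.ofReal_add (by positivity) (by positivity)] at houter
  exact (ENNReal.add_le_add_iff_right ENNReal.ofReal_ne_top).1 houter
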